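/- The family of crowns of G equals the family of local maximum independent sets of G if and only if G[N[S]] is a König–Egerváry graph for every local maximum independent set S of G. -/

import Mathlib

open Finset

variable {V : Type*}

namespace CrownPaper

variable [Fintype V] [DecidableEq V]

/-- The (open) neighborhood of a finite set of vertices. -/
def nbrs (G : SimpleGraph V) [DecidableRel G.Adj] (A : Finset V) : Finset V :=
  univ.filter (fun v => ∃ a ∈ A, G.Adj v a)

/-- The closed neighborhood `N[A] = A ∪ N(A)`. -/
def closedNbrs (G : SimpleGraph V) [DecidableRel G.Adj] (A : Finset V) : Finset V :=
  A ∪ nbrs G A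

/-- `S` is an independent set of `G`. -/
def IsIndep (G : SimpleGraph V) (S : Finset V) : Prop :=
  ∀ a ∈ S, ∀ b ∈ S, ¬ G.Adj a b

/-- The difference `d(S) = |S| - |N(S)|`. -/
def diff (G : SimpleGraph V) [DecidableRel G.Adj] (S : Finset V) : ℤ :=
  (S.card : ℤ) - ((nbrs G S).card : ℤ)

/-- `S` is a critical independent set. -/
def IsCritIndep (G : SimpleGraph V) [DecidableRel G.Adj] (S : Finset V) : Prop :=
  IsIndep G S ∧ ∀ I : Finset V, IsIndep G I → diff G I ≤ diff G S

/-- `S` is a crown: an independent set with a matching from `N(S)` into `S`. -/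
def IsCrown (G : SimpleGraph V) [DecidableRel G.Adj] (S : Finset V) : Prop :=
  IsIndep G S ∧ ∃ f : V → V, (∀ v ∈ nbrs G S, f v ∈ S ∧ G.Adj v (f v)) ∧
    Set.InjOn f (nbrs G S : Set V)

/-- `S` is a local maximum independent set: a maximum independent set of `G[N[S]]`. -/
def IsLocalMaxIndep (G : SimpleGraph V) [DecidableRel G.Adj] (S : Finset V) : Prop :=
  IsIndep G S ∧ ∀ I : Finset V, IsIndep G I → I ⊆ closedNbrs G S → I.card ≤ S.card

/-- The independence number. -/
noncomputable def alpha (G : SimpleGraph V) : ℕ :=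
  sSup {n | ∃ S : Finset V, IsIndep G S ∧ S.card = n}

/-- `M` is a matching of `G`, given as a finite set of (ordered) edges. -/
def IsMatching (G : SimpleGraph V) (M : Finset (V × V)) : Prop :=
  (∀ e ∈ M, G.Adj e.1 e.2) ∧
  ∀ e ∈ M, ∀ e' ∈ M, e ≠ e' →
    e.1 ≠ e'.1 ∧ e.1 ≠ e'.2 ∧ e.2 ≠ e'.1 ∧ e.2 ≠ e'.2

/-- The matching number. -/
noncomputable def mu (G : SimpleGraph V) : ℕ :=
  sSup {n | ∃ M : Finset (V × V), IsMatching G M ∧ M.card = n}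

/-- `G` has a perfect matching. -/
def HasPerfectMatching (G : SimpleGraph V) : Prop :=
  ∃ M : Finset (V × V), IsMatching G M ∧ ∀ v : V, ∃ e ∈ M, v = e.1 ∨ v = e.2

/-- `G` is a König–Egerváry graph: `α(G) + μ(G) = |V(G)|`. -/
def IsKonigEgervary (G : SimpleGraph V) : Prop :=
  alpha G + mu G = Fintype.card V

/-- `G` is bipartite. -/
def IsBipartite (G : SimpleGraph V) : Prop :=
  ∃ X : Set V, ∀ a b : V, G.Adj a b → (a ∈ X ↔ b ∉ X)

end CrownPaper

open CrownPaper
section AuxGeneric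

open Finset CrownPaper

variable {W : Type*} [Fintype W] [DecidableEq W] (H : SimpleGraph W)

lemma aux_alphaSet_bdd : BddAbove {n | ∃ S : Finset W, IsIndep H S ∧ S.card = n} :=
  ⟨Fintype.card W, fun _ ⟨S, _, h⟩ => h ▸ S.card_le_univ⟩

lemma aux_muSet_bdd : BddAbove {n | ∃ M : Finset (W × W), IsMatching H M ∧ M.card = n} :=
  ⟨Fintype.card (W × W), fun _ ⟨M, _, h⟩ => h ▸ M.card_le_univ⟩

lemma aux_le_alpha {A : Finset W} (h : IsIndep H A) : A.card ≤ alpha H :=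
  le_csSup (aux_alphaSet_bdd H) ⟨A, h, rfl⟩

lemma aux_le_mu {M : Finset (W × W)} (h : IsMatching H M) : M.card ≤ mu H :=
  le_csSup (aux_muSet_bdd H) ⟨M, h, rfl⟩

lemma aux_exists_alpha : ∃ A : Finset W, IsIndep H A ∧ A.card = alpha H := by
  have : alpha H ∈ {n | ∃ S : Finset W, IsIndep H S ∧ S.card = n} :=
    Nat.sSup_mem ⟨0, ∅, fun a ha => absurd ha (Finset.notMem_empty a), Finset.card_empty⟩
      (aux_alphaSet_bdd H)
  exact this

lemma aux_exists_mu : ∃ M : Finset (W × W), IsMatching H M ∧ M.card = mu H := by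
  have : mu H ∈ {n | ∃ M : Finset (W × W), IsMatching H M ∧ M.card = n} :=
    Nat.sSup_mem ⟨0, ∅, ⟨fun e he => absurd he (Finset.notMem_empty e),
      fun e he => absurd he (Finset.notMem_empty e)⟩, Finset.card_empty⟩ (aux_muSet_bdd H)
  exact this

lemma aux_alpha_add_mu_le : alpha H + mu H ≤ Fintype.card W := by
  obtain ⟨A, hA, hAc⟩ := aux_exists_alpha H
  obtain ⟨M, hM, hMc⟩ := aux_exists_mu H
  set g : W × W → W := fun e => if e.1 ∈ A then e.2 else e.1 with hgdef
  have hmem : ∀ e ∈ M, g e ∈ univ \ A := by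
    intro e he
    simp only [mem_sdiff, mem_univ, true_and, hgdef]
    split
    · next h1 => exact fun h2 => hA _ h1 _ h2 (hM.1 e he)
    · next h1 => exact h1
  have hcases : ∀ e : W × W, g e = e.1 ∨ g e = e.2 := by
    intro e; simp only [hgdef]; split
    · exact Or.inr rfl
    · exact Or.inl rfl
  have hinj : Set.InjOn g M := by
    intro e he e' he' heq
    by_contra hne
    obtain ⟨h1, h2, h3, h4⟩ := hM.2 e he e' he' hne
    rcases hcases e with h | h <;> rcases hcases e' with h' | h' <;>
      rw [h, h'] at heq <;> tauto
  have hle := Finset.card_le_card_of_injOn g hmem hinj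
  have h2 : (univ \ A).card = Fintype.card W - A.card := by
    rw [Finset.card_sdiff_of_subset (Finset.subset_univ A), Finset.card_univ]
  have h3 : A.card ≤ Fintype.card W := A.card_le_univ
  omega

end AuxGeneric

lemma aux_card_subtype {V : Type*} [DecidableEq V] (s : Finset V)
    (inst : Fintype ↥(↑s : Set V)) : @Fintype.card _ inst = s.card := by
  rw [show @Fintype.card _ inst = Fintype.card ↥s from
    Fintype.card_congr (Equiv.subtypeEquivRight (fun x => Finset.mem_coe))]
  exact Fintype.card_coe s

section AuxSpecific

open Finset CrownPaper

variable [Fintype V] [DecidableEq V] (G : SimpleGraph V) [DecidableRel G.Adj]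

lemma aux_mem_nbrs {A : Finset V} {v : V} : v ∈ nbrs G A ↔ ∃ a ∈ A, G.Adj v a := by
  simp [nbrs]

lemma aux_not_mem_nbrs {S : Finset V} (hS : IsIndep G S) {v : V} (hv : v ∈ S) :
    v ∉ nbrs G S := by
  intro h
  rw [aux_mem_nbrs] at h
  obtain ⟨a, ha, hadj⟩ := h
  exact hS v hv a ha hadj

lemma aux_card_closed {S : Finset V} (hS : IsIndep G S) :
    (closedNbrs G S).card = S.card + (nbrs G S).card := by
  rw [closedNbrs, card_union_of_disjoint]
  rw [Finset.disjoint_left]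
  intro v hv
  exact aux_not_mem_nbrs G hS hv

lemma aux_mem_closed {S : Finset V} {v : V} :
    v ∈ closedNbrs G S ↔ v ∈ S ∨ v ∈ nbrs G S := Finset.mem_union

lemma aux_alpha_eq {S : Finset V} (hS : IsLocalMaxIndep G S) :
    alpha (G.induce (↑(closedNbrs G S) : Set V)) = S.card := by
  apply le_antisymm
  · obtain ⟨A, hA, hAc⟩ := aux_exists_alpha (G.induce (↑(closedNbrs G S) : Set V))
    rw [← hAc]
    have hc : (A.image Subtype.val).card = A.card :=
      Finset.card_image_of_injective _ Subtype.val_injective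
    rw [← hc]
    apply hS.2
    · intro a ha b hb hadj
      simp only [Finset.mem_image] at ha hb
      obtain ⟨x, hx, rfl⟩ := ha
      obtain ⟨y, hy, rfl⟩ := hb
      exact hA x hx y hy (by simpa using hadj)
    · intro a ha
      simp only [Finset.mem_image] at ha
      obtain ⟨x, hx, rfl⟩ := ha
      simpa using x.2
  · have h1 : S ⊆ closedNbrs G S := Finset.subset_union_left
    set SL : Finset {x // x ∈ (↑(closedNbrs G S) : Set V)} :=
      S.attach.map ⟨fun x => ⟨x.1, by simpa using h1 x.2⟩,
        fun a b hab => Subtype.ext (by simpa using congrArg Subtype.val hab)⟩ with hSL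
    have hind : IsIndep (G.induce (↑(closedNbrs G S) : Set V)) SL := by
      intro a ha b hb hadj
      simp only [hSL, Finset.mem_map, Finset.mem_attach, true_and,
        Function.Embedding.coeFn_mk] at ha hb
      obtain ⟨x, rfl⟩ := ha
      obtain ⟨y, rfl⟩ := hb
      exact hS.1 x.1 x.2 y.1 y.2 (by exact hadj)
    have := aux_le_alpha _ hind
    simpa [hSL] using this

lemma aux_crown_mu {S : Finset V} (hC : IsCrown G S) :
    (nbrs G S).card ≤ mu (G.induce (↑(closedNbrs G S) : Set V)) := by
  obtain ⟨hI, f, hf, hinj⟩ := hC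
  have hN : nbrs G S ⊆ closedNbrs G S := Finset.subset_union_right
  have hSsub : S ⊆ closedNbrs G S := Finset.subset_union_left
  set emb : {x // x ∈ nbrs G S} →
      {x // x ∈ (↑(closedNbrs G S) : Set V)} × {x // x ∈ (↑(closedNbrs G S) : Set V)} :=
    fun v => (⟨v.1, by simpa using hN v.2⟩, ⟨f v.1, by simpa using hSsub (hf v.1 v.2).1⟩)
    with hembdef
  have hinj2 : Function.Injective emb := by
    intro a b hab
    apply Subtype.ext
    exact congrArg (fun p => p.1.1) hab
  set M := (nbrs G S).attach.map ⟨emb, hinj2⟩ with hM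
  have hcard : M.card = (nbrs G S).card := by simp [hM]
  rw [← hcard]
  apply aux_le_mu
  constructor
  · intro e he
    simp only [hM, Finset.mem_map, Finset.mem_attach, true_and,
      Function.Embedding.coeFn_mk] at he
    obtain ⟨v, rfl⟩ := he
    simpa [hembdef] using (hf v.1 v.2).2
  · intro e he e' he' hne
    simp only [hM, Finset.mem_map, Finset.mem_attach, true_and,
      Function.Embedding.coeFn_mk] at he he'
    obtain ⟨v, rfl⟩ := he
    obtain ⟨v', rfl⟩ := he'
    have hvv : v.1 ≠ v'.1 := by
      intro h
      exact hne (congrArg emb (Subtype.ext h))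
    refine ⟨?_, ?_, ?_, ?_⟩
    · intro h
      rw [hembdef] at h
      exact hvv (by simpa using congrArg Subtype.val h)
    · intro h
      rw [hembdef] at h
      have h2 : v.1 = f v'.1 := by simpa using congrArg Subtype.val h
      exact aux_not_mem_nbrs G hI (hf v'.1 v'.2).1 (h2 ▸ v.2)
    · intro h
      rw [hembdef] at h
      have h2 : f v.1 = v'.1 := by simpa using congrArg Subtype.val h
      exact aux_not_mem_nbrs G hI (hf v.1 v.2).1 (h2 ▸ v'.2)
    · intro h
      rw [hembdef] at h
      have h2 : f v.1 = f v'.1 := by simpa using congrArg Subtype.val h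
      exact hvv (hinj (by simpa using v.2) (by simpa using v'.2) h2)

lemma aux_localmax {S : Finset V} (hC : IsCrown G S) : IsLocalMaxIndep G S := by
  obtain ⟨hI, f, hf, hinj⟩ := hC
  refine ⟨hI, fun I hIind hIsub => ?_⟩
  have key : (I \ S).card ≤ (S \ I).card := by
    apply Finset.card_le_card_of_injOn f
    · intro b hb
      rw [Finset.mem_coe, Finset.mem_sdiff] at hb
      have hbn : b ∈ nbrs G S := by
        have := hIsub hb.1
        rw [aux_mem_closed] at this
        tauto
      rw [Finset.mem_coe, Finset.mem_sdiff]
      exact ⟨(hf b hbn).1, fun hbI => hIind b hb.1 (f b) hbI (hf b hbn).2⟩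
    · intro a ha b hb hab
      rw [Finset.coe_sdiff] at ha hb
      have han : a ∈ nbrs G S := by
        have := hIsub ha.1
        rw [aux_mem_closed] at this
        rcases this with h | h
        · exact absurd h ha.2
        · exact h
      have hbn : b ∈ nbrs G S := by
        have := hIsub hb.1
        rw [aux_mem_closed] at this
        rcases this with h | h
        · exact absurd h hb.2
        · exact h
      exact hinj han hbn hab
  have h1 : (I ∩ S).card + (I \ S).card = I.card := Finset.card_inter_add_card_sdiff I S
  have h2 : (S ∩ I).card + (S \ I).card = S.card := Finset.card_inter_add_card_sdiff S I
  have h3 : (I ∩ S).card = (S ∩ I).card := by rw [Finset.inter_comm]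
  omega

lemma aux_crown_of_KE {S : Finset V} (hS : IsLocalMaxIndep G S)
    (hKE : IsKonigEgervary (G.induce (↑(closedNbrs G S) : Set V))) : IsCrown G S := by
  classical
  have halpha := aux_alpha_eq G hS
  have hmu : mu (G.induce (↑(closedNbrs G S) : Set V)) = (nbrs G S).card := by
    have h1 := hKE
    rw [IsKonigEgervary, aux_card_subtype, aux_card_closed G hS.1] at h1
    omega
  obtain ⟨M, hM, hMc⟩ := aux_exists_mu (G.induce (↑(closedNbrs G S) : Set V))
  set g : {x // x ∈ (↑(closedNbrs G S) : Set V)} × {x // x ∈ (↑(closedNbrs G S) : Set V)} → V :=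
    fun e => if e.1.1 ∈ nbrs G S then e.1.1 else e.2.1 with hgdef
  set o : {x // x ∈ (↑(closedNbrs G S) : Set V)} × {x // x ∈ (↑(closedNbrs G S) : Set V)} → V :=
    fun e => if e.1.1 ∈ nbrs G S then e.2.1 else e.1.1 with hodef
  have hend : ∀ x : {x // x ∈ (↑(closedNbrs G S) : Set V)}, x.1 ∈ S ∨ x.1 ∈ nbrs G S := by
    intro x
    have := x.2
    rw [Finset.mem_coe, aux_mem_closed] at this
    exact this
  have hadjM : ∀ e ∈ M, G.Adj e.1.1 e.2.1 := by
    intro e he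
    have := hM.1 e he
    simpa using this
  have hgmem : ∀ e ∈ M, g e ∈ nbrs G S := by
    intro e he
    simp only [hgdef]
    split
    · assumption
    · next h =>
      have h1 : e.1.1 ∈ S := (hend e.1).resolve_right h
      rcases hend e.2 with h2 | h2
      · exact absurd (hadjM e he) (hS.1 _ h1 _ h2)
      · exact h2
  have hgcases : ∀ e, g e = e.1.1 ∨ g e = e.2.1 := by
    intro e
    simp only [hgdef]
    split
    · exact Or.inl rfl
    · exact Or.inr rfl
  have hdistinct : ∀ e ∈ M, ∀ e' ∈ M, e ≠ e' →
      e.1.1 ≠ e'.1.1 ∧ e.1.1 ≠ e'.2.1 ∧ e.2.1 ≠ e'.1.1 ∧ e.2.1 ≠ e'.2.1 := by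
    intro e he e' he' hne
    obtain ⟨q1, q2, q3, q4⟩ := hM.2 e he e' he' hne
    exact ⟨fun h => q1 (Subtype.ext h), fun h => q2 (Subtype.ext h),
      fun h => q3 (Subtype.ext h), fun h => q4 (Subtype.ext h)⟩
  have hginj : Set.InjOn g M := by
    intro e he e' he' heq
    by_contra hne
    obtain ⟨h1, h2, h3, h4⟩ := hdistinct e he e' he' hne
    rcases hgcases e with h | h <;> rcases hgcases e' with h' | h' <;>
      rw [h, h'] at heq <;> tauto
  have himg : M.image g = nbrs G S := by
    apply Finset.eq_of_subset_of_card_le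
    · intro v hv
      rw [Finset.mem_image] at hv
      obtain ⟨e, he, rfl⟩ := hv
      exact hgmem e he
    · rw [Finset.card_image_of_injOn hginj, hMc, hmu]
  -- the "other" endpoint of each matching edge lies in S
  have hother : ∀ e ∈ M, o e ∈ S := by
    intro e he
    simp only [hodef]
    split
    · next h1 =>
      rcases hend e.2 with h2 | h2
      · exact h2
      · exfalso
        rw [← himg, Finset.mem_image] at h2
        obtain ⟨e', he', hgq⟩ := h2
        by_cases hee : e = e'
        · subst hee
          have hge : g e = e.1.1 := by simp only [hgdef]; rw [if_pos h1]
          exact (hadjM e he).ne (hge ▸ hgq)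
        · obtain ⟨q1, q2, q3, q4⟩ := hdistinct e' he' e he (Ne.symm hee)
          rcases hgcases e' with h | h <;> rw [h] at hgq <;> tauto
    · next h1 => exact (hend e.1).resolve_right h1
  have hotherCases : ∀ e, o e = e.1.1 ∨ o e = e.2.1 := by
    intro e
    simp only [hodef]
    split
    · exact Or.inr rfl
    · exact Or.inl rfl
  refine ⟨hS.1, fun v => if h : (M.filter (fun e => g e = v)).Nonempty
    then o h.choose else v, ?_, ?_⟩
  · intro v hv
    have hne : (M.filter (fun e => g e = v)).Nonempty := by
      rw [← himg, Finset.mem_image] at hv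
      obtain ⟨e, he, hge⟩ := hv
      exact ⟨e, Finset.mem_filter.mpr ⟨he, hge⟩⟩
    simp only [dif_pos hne]
    have hspec := hne.choose_spec
    rw [Finset.mem_filter] at hspec
    obtain ⟨heM, hgv⟩ := hspec
    constructor
    · exact hother _ heM
    · have h3 : G.Adj (g hne.choose) (o hne.choose) := by
        by_cases hc : hne.choose.1.1 ∈ nbrs G S
        · have e1 : g hne.choose = hne.choose.1.1 := by
            simp only [hgdef]; rw [if_pos hc]
          have e2 : o hne.choose = hne.choose.2.1 := by
            simp only [hodef]; rw [if_pos hc]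
          rw [e1, e2]; exact hadjM _ heM
        · have e1 : g hne.choose = hne.choose.2.1 := by
            simp only [hgdef]; rw [if_neg hc]
          have e2 : o hne.choose = hne.choose.1.1 := by
            simp only [hodef]; rw [if_neg hc]
          rw [e1, e2]; exact (hadjM _ heM).symm
      rw [hgv] at h3
      exact h3
  · intro v hv v' hv' heq
    rw [Finset.mem_coe] at hv hv'
    have hne : (M.filter (fun e => g e = v)).Nonempty := by
      rw [← himg, Finset.mem_image] at hv
      obtain ⟨e, he, hge⟩ := hv
      exact ⟨e, Finset.mem_filter.mpr ⟨he, hge⟩⟩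
    have hne' : (M.filter (fun e => g e = v')).Nonempty := by
      rw [← himg, Finset.mem_image] at hv'
      obtain ⟨e, he, hge⟩ := hv'
      exact ⟨e, Finset.mem_filter.mpr ⟨he, hge⟩⟩
    simp only [dif_pos hne, dif_pos hne'] at heq
    have hspec := hne.choose_spec
    have hspec' := hne'.choose_spec
    rw [Finset.mem_filter] at hspec hspec'
    obtain ⟨heM, hgv⟩ := hspec
    obtain ⟨heM', hgv'⟩ := hspec'
    by_cases hee : hne.choose = hne'.choose
    · rw [← hgv, ← hgv', hee]
    · exfalso
      obtain ⟨q1, q2, q3, q4⟩ := hdistinct _ heM _ heM' hee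
      rcases hotherCases hne.choose with h | h <;> rcases hotherCases hne'.choose with h' | h' <;>
        rw [h, h'] at heq <;> tauto

end AuxSpecific

theorem crown_eq_psi_iff (G : SimpleGraph V) [Fintype V] [DecidableEq V]
    [DecidableRel G.Adj] :
    (∀ S : Finset V, IsCrown G S ↔ IsLocalMaxIndep G S) ↔
    (∀ S : Finset V, IsLocalMaxIndep G S →
      IsKonigEgervary (G.induce (↑(closedNbrs G S) : Set V))) := by
  constructor
  · intro h S hS
    have hC := (h S).mpr hS
    have h1 := aux_alpha_eq G hS
    have h2 := aux_crown_mu G hC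
    have h3 := aux_alpha_add_mu_le (G.induce (↑(closedNbrs G S) : Set V))
    rw [aux_card_subtype, aux_card_closed G hS.1] at h3
    rw [IsKonigEgervary, aux_card_subtype, aux_card_closed G hS.1]
    omega
  · intro h S
    exact ⟨fun hC => aux_localmax G hC, fun hS => aux_crown_of_KE G hS (h S hS)⟩
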